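/- Suppose Γ is residually finite, 1 → Z → Γ̃ → Γ → 1 is an extension with Γ̃ finitely generated, and there is a nilpotent quotient N of Γ̃ such that Z injects into N. Then Γ̃ is residually finite. -/

import Mathlib

open Subgroup
open scoped commutatorElement

section Helpers

variable {G : Type*} [Group G]

/-- A subgroup contained in the center is normal. -/
theorem normal_of_le_center' (K : Subgroup G) (h : K ≤ Subgroup.center G) : K.Normal := by
  constructor
  intro n hn g
  have := (Subgroup.mem_center_iff.mp (h hn) g).symm
  have : g * n * g⁻¹ = n := by
    rw [← this]; group
  rwa [this]

/-- Commutator identity: ⁅a*b, c⁆ = a * ⁅b,c⁆ * a⁻¹ * ⁅a,c⁆ -/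
theorem comm_mul_left (a b c : G) : ⁅a * b, c⁆ = a * ⁅b, c⁆ * a⁻¹ * ⁅a, c⁆ := by
  simp only [commutatorElement_def]; group

theorem comm_mul_right (a b c : G) : ⁅a, b * c⁆ = ⁅a, b⁆ * (b * ⁅a, c⁆ * b⁻¹) := by
  simp only [commutatorElement_def]; group

theorem comm_inv_right (a b : G) : ⁅a, b⁻¹⁆ = b⁻¹ * ⁅a, b⁆⁻¹ * b := by
  simp only [commutatorElement_def]; group

theorem comm_inv_left (a b : G) : ⁅a⁻¹, b⁆ = a⁻¹ * ⁅a, b⁆⁻¹ * a := by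
  simp only [commutatorElement_def]; group

theorem center_conj {z : G} (hz : z ∈ Subgroup.center G) (g : G) : g * z * g⁻¹ = z := by
  rw [Subgroup.mem_center_iff] at hz
  rw [hz g]; group

theorem center_conj_inv {z : G} (hz : z ∈ Subgroup.center G) (g : G) : g * z⁻¹ * g⁻¹ = z⁻¹ :=
  center_conj ((Subgroup.center G).inv_mem hz) g

theorem comm_eq_one_of_center {z : G} (hz : z ∈ Subgroup.center G) (g : G) : ⁅z, g⁆ = 1 := by
  have := Subgroup.mem_center_iff.mp hz g
  simp only [commutatorElement_def]
  rw [← this]; group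

end Helpers

section FGLemmas

variable {G G' : Type*} [Group G] [Group G']

theorem Subgroup.FG.map' {P : Subgroup G} (h : P.FG) (f : G →* G') : (P.map f).FG := by
  classical
  obtain ⟨S, hS⟩ := h
  exact ⟨S.image f, by rw [Finset.coe_image, ← MonoidHom.map_closure, hS]⟩

/-- Subgroups of f.g. abelian groups are f.g. -/
theorem fg_subgroup_of_comm {A : Type*} [CommGroup A] [Group.FG A] (H : Subgroup A) : H.FG := by
  have h1 : AddGroup.FG (Additive A) := GroupFG.iff_add_fg.1 ‹_›
  have h2 : Module.Finite ℤ (Additive A) := Module.Finite.iff_addGroup_fg.mpr h1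
  have h3 : IsNoetherian ℤ (Additive A) := isNoetherian_of_isNoetherianRing_of_finite ℤ (Additive A)
  rw [Subgroup.fg_iff_add_fg]
  rw [← AddSubgroup.toIntSubmodule_toAddSubgroup (Subgroup.toAddSubgroup H),
    ← Submodule.fg_iff_addSubgroup_fg]
  exact IsNoetherian.noetherian _

/-- If the image of `H` under `f` is f.g. then `H` is generated by finitely many elements
of `H` together with `H ⊓ ker f`. -/
theorem exists_finset_closure_union_ker (f : G →* G') (H : Subgroup G)
    (hmap : (H.map f).FG) :
    ∃ A : Finset G, ↑A ⊆ (H : Set G) ∧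
      H = Subgroup.closure (↑A ∪ ((H ⊓ f.ker : Subgroup G) : Set G)) := by
  obtain ⟨B, hB⟩ := hmap
  have hmem : ∀ b ∈ B, ∃ a, a ∈ H ∧ f a = b := by
    intro b hb
    have : b ∈ H.map f := by rw [← hB]; exact Subgroup.subset_closure hb
    obtain ⟨a, ha, rfl⟩ := this
    exact ⟨a, ha, rfl⟩
  choose g hg1 hg2 using hmem
  classical
  refine ⟨B.attach.image (fun x => g x.1 x.2), ?_, ?_⟩
  · intro a ha
    obtain ⟨x, -, rfl⟩ := Finset.mem_image.mp (Finset.mem_coe.mp ha)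
    exact hg1 x.1 x.2
  · set A : Finset G := B.attach.image (fun x => g x.1 x.2) with hA
    apply le_antisymm
    · intro h hh
      -- f h ∈ closure B = map f (closure A)
      have hBA : (B : Set G') ⊆ f '' (A : Set G) := by
        intro b hb
        exact ⟨g b hb, Finset.mem_coe.mpr (Finset.mem_image.mpr
          ⟨⟨b, hb⟩, Finset.mem_attach _ _, rfl⟩), hg2 b hb⟩
      have hfh : f h ∈ Subgroup.map f (Subgroup.closure (A : Set G)) := by
        rw [MonoidHom.map_closure]
        have : f h ∈ Subgroup.closure (B : Set G') := by rw [hB]; exact ⟨h, hh, rfl⟩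
        exact Subgroup.closure_mono hBA this
      obtain ⟨x, hx, hfx⟩ := hfh
      have hxH : x ∈ H := by
        have : Subgroup.closure (A : Set G) ≤ H := by
          rw [Subgroup.closure_le]
          intro a ha
          obtain ⟨y, -, rfl⟩ := Finset.mem_image.mp (Finset.mem_coe.mp ha)
          exact hg1 y.1 y.2
        exact this hx
      have hker : x⁻¹ * h ∈ H ⊓ f.ker := by
        refine Subgroup.mem_inf.mpr ⟨H.mul_mem (H.inv_mem hxH) hh, ?_⟩
        rw [MonoidHom.mem_ker, map_mul, map_inv, hfx]; group
      have hx' : x ∈ Subgroup.closure (↑A ∪ ((H ⊓ f.ker : Subgroup G) : Set G)) :=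
        Subgroup.closure_mono Set.subset_union_left hx
      have hk' : x⁻¹ * h ∈ Subgroup.closure (↑A ∪ ((H ⊓ f.ker : Subgroup G) : Set G)) :=
        Subgroup.subset_closure (Set.mem_union_right _ hker)
      have := Subgroup.mul_mem _ hx' hk'
      rwa [mul_inv_cancel_left] at this
    · rw [Subgroup.closure_le]
      apply Set.union_subset
      · intro a ha
        obtain ⟨y, -, rfl⟩ := Finset.mem_image.mp (Finset.mem_coe.mp ha)
        exact hg1 y.1 y.2
      · intro x hx
        exact (Subgroup.mem_inf.mp hx).1

/-- If the image of `H` is f.g. and `H ⊓ ker f` is f.g. then `H` is f.g. -/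
theorem fg_of_map_fg_of_ker_fg (f : G →* G') (H : Subgroup G)
    (hmap : (H.map f).FG) (hker : (H ⊓ f.ker : Subgroup G).FG) : H.FG := by
  obtain ⟨A, hAH, hA⟩ := exists_finset_closure_union_ker f H hmap
  obtain ⟨C, hC⟩ := hker
  rw [Subgroup.fg_iff]
  refine ⟨↑A ∪ ↑C, ?_, (A.finite_toSet.union C.finite_toSet)⟩
  have hcl : Subgroup.closure ((H ⊓ f.ker : Subgroup G) : Set G) = H ⊓ f.ker :=
    Subgroup.closure_eq _
  rw [Subgroup.closure_union, hC]
  conv_rhs => rw [hA]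
  rw [Subgroup.closure_union, hcl]

end FGLemmas

section Core

variable {G G' : Type*} [Group G] [Group G']

/-- Fitting-type lemma: if `K = ⁅H, ⊤⁆` is central and `H = closure (A ∪ K)` with `A` finite,
then `K` is finitely generated (when `G` is f.g.). -/
theorem commutator_subgroup_fg [Group.FG G] (H : Subgroup G)
    (hcent : ⁅H, (⊤ : Subgroup G)⁆ ≤ Subgroup.center G)
    (hKH : ⁅H, (⊤ : Subgroup G)⁆ ≤ H)
    (A : Finset G) (hAH : ↑A ⊆ (H : Set G))
    (hH : H = Subgroup.closure (↑A ∪ ((⁅H, (⊤ : Subgroup G)⁆ : Subgroup G) : Set G))) :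
    (⁅H, (⊤ : Subgroup G)⁆ : Subgroup G).FG := by
  classical
  set K := ⁅H, (⊤ : Subgroup G)⁆ with hK
  obtain ⟨S, hS⟩ : (⊤ : Subgroup G).FG := Group.fg_def.mp ‹_›
  set T : Finset G := (A ×ˢ S).image (fun p => ⁅p.1, p.2⁆) with hT
  set C := Subgroup.closure (T : Set G) with hCdef
  have hTK : (T : Set G) ⊆ (K : Set G) := by
    intro x hx
    obtain ⟨⟨a, s⟩, hmem, rfl⟩ := Finset.mem_image.mp (Finset.mem_coe.mp hx)
    obtain ⟨ha, _⟩ := Finset.mem_product.mp hmem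
    exact Subgroup.commutator_mem_commutator (hAH ha) (Subgroup.mem_top _)
  have hCK : C ≤ K := by rw [hCdef, Subgroup.closure_le]; exact hTK
  -- step 1 : for a ∈ A, all g : ⁅a, g⁆ ∈ C
  have step1 : ∀ a ∈ A, ∀ g : G, ⁅a, g⁆ ∈ C := by
    intro a ha g
    have hg : g ∈ Subgroup.closure (S : Set G) := by rw [hS]; trivial
    induction hg using Subgroup.closure_induction with
    | mem s hs =>
        exact Subgroup.subset_closure (Finset.mem_coe.mpr (Finset.mem_image.mpr
          ⟨(a, s), Finset.mem_product.mpr ⟨ha, Finset.mem_coe.mp hs⟩, rfl⟩))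
    | one => simpa using C.one_mem
    | mul x y hx hy ihx ihy =>
        have hyc : ⁅a, y⁆ ∈ Subgroup.center G :=
          hcent (Subgroup.commutator_mem_commutator (hAH ha) (Subgroup.mem_top _))
        have : ⁅a, x * y⁆ = ⁅a, x⁆ * ⁅a, y⁆ := by
          rw [comm_mul_right, center_conj hyc]
        rw [this]; exact C.mul_mem ihx ihy
    | inv x hx ihx =>
        have hxc : ⁅a, x⁆ ∈ Subgroup.center G :=
          hcent (Subgroup.commutator_mem_commutator (hAH ha) (Subgroup.mem_top _))
        have : ⁅a, x⁻¹⁆ = ⁅a, x⁆⁻¹ := by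
          have h := center_conj_inv hxc x⁻¹
          rw [inv_inv] at h
          rw [comm_inv_right, h]
        rw [this]; exact C.inv_mem ihx
  -- step 2 : for h ∈ H, all g : ⁅h, g⁆ ∈ C
  have hsubH : Subgroup.closure (↑A ∪ (K : Set G)) ≤ H := by
    rw [Subgroup.closure_le]
    exact Set.union_subset hAH hKH
  have step2 : ∀ h ∈ H, ∀ g : G, ⁅h, g⁆ ∈ C := by
    intro h hh g
    rw [hH] at hh
    induction hh using Subgroup.closure_induction with
    | mem x hx =>
        rcases hx with hx | hx
        · exact step1 x hx g
        · rw [comm_eq_one_of_center (hcent hx) g]; exact C.one_mem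
    | one => simpa using C.one_mem
    | mul x y hx hy ihx ihy =>
        have hyH : y ∈ H := hsubH hy
        have hyc : ⁅y, g⁆ ∈ Subgroup.center G :=
          hcent (Subgroup.commutator_mem_commutator hyH (Subgroup.mem_top _))
        have : ⁅x * y, g⁆ = ⁅y, g⁆ * ⁅x, g⁆ := by
          rw [comm_mul_left, center_conj hyc]
        rw [this]; exact C.mul_mem ihy ihx
    | inv x hx ihx =>
        have hxH : x ∈ H := hsubH hx
        have hxc : ⁅x, g⁆ ∈ Subgroup.center G :=
          hcent (Subgroup.commutator_mem_commutator hxH (Subgroup.mem_top _))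
        have : ⁅x⁻¹, g⁆ = ⁅x, g⁆⁻¹ := by
          have h := center_conj_inv hxc x⁻¹
          rw [inv_inv] at h
          rw [comm_inv_left, h]
        rw [this]; exact C.inv_mem ihx
  have hKC : K ≤ C := by
    rw [hK, Subgroup.commutator_le]
    intro h hh g _
    exact step2 h hh g
  have : K = C := le_antisymm hKC hCK
  rw [this, hCdef]
  exact ⟨T, rfl⟩

/-- Lower central series maps onto lower central series under surjections. -/
theorem lcs_map_surjective (f : G →* G') (hf : Function.Surjective f) (n : ℕ) :
    (Subgroup.lowerCentralSeries (⊤ : Subgroup G) n).map f = Subgroup.lowerCentralSeries (⊤ : Subgroup G') n := by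
  induction n with
  | zero =>
      simp only [Subgroup.lowerCentralSeries_zero]
      rw [← MonoidHom.range_eq_map, MonoidHom.range_eq_top]
      exact hf
  | succ n ih =>
      have h1 : Subgroup.lowerCentralSeries (⊤ : Subgroup G) (n + 1) = ⁅Subgroup.lowerCentralSeries (⊤ : Subgroup G) n, (⊤ : Subgroup G)⁆ := rfl
      have h2 : Subgroup.lowerCentralSeries (⊤ : Subgroup G') (n + 1) = ⁅Subgroup.lowerCentralSeries (⊤ : Subgroup G') n, (⊤ : Subgroup G')⁆ := rfl
      rw [h1, h2, Subgroup.map_commutator, ih]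
      congr 1
      rw [← MonoidHom.range_eq_map, MonoidHom.range_eq_top]
      exact hf

end Core

section Noeth

universe u

/-- Every subgroup of a f.g. group with `Subgroup.lowerCentralSeries (⊤ : Subgroup G) n = ⊥` is f.g. -/
theorem fg_subgroup_of_nilpotent_aux (n : ℕ) :
    ∀ {G : Type u} [Group G] [Group.FG G], Subgroup.lowerCentralSeries (⊤ : Subgroup G) n = ⊥ →
      ∀ H : Subgroup G, H.FG := by
  induction n with
  | zero =>
      intro G _ _ h H
      have hx : ∀ x : G, x = 1 := by
        intro x
        have hm : x ∈ (⊤ : Subgroup G) := Subgroup.mem_top x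
        rw [← Subgroup.lowerCentralSeries_zero (S := ⊤), h] at hm
        exact Subgroup.mem_bot.mp hm
      refine ⟨∅, ?_⟩
      ext g
      rw [hx g]
      simp only [Finset.coe_empty, Subgroup.closure_empty, Subgroup.mem_bot]
      exact iff_of_true trivial H.one_mem
  | succ n ih =>
      intro G _ _ h H
      cases n with
      | zero =>
          -- `G` is abelian
          have hcomm : ∀ a b : G, a * b = b * a := by
            intro a b
            have hm : ⁅a, b⁆ ∈ Subgroup.lowerCentralSeries (⊤ : Subgroup G) 1 :=
              Subgroup.commutator_mem_commutator (Subgroup.mem_top a) (Subgroup.mem_top b)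
            rw [h] at hm
            exact (commutatorElement_eq_one_iff_commute.mp (Subgroup.mem_bot.mp hm)).eq
          letI : CommGroup G := { ‹Group G› with mul_comm := hcomm }
          exact fg_subgroup_of_comm H
      | succ m =>
          set K := Subgroup.lowerCentralSeries (⊤ : Subgroup G) (m + 1) with hKdef
          have hKcomm : ⁅Subgroup.lowerCentralSeries (⊤ : Subgroup G) m, (⊤ : Subgroup G)⁆ = K := rfl
          have hKcent : K ≤ Subgroup.center G := by
            intro k hk
            rw [Subgroup.mem_center_iff]
            intro g
            have hm : ⁅k, g⁆ ∈ Subgroup.lowerCentralSeries (⊤ : Subgroup G) (m + 2) :=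
              Subgroup.commutator_mem_commutator hk (Subgroup.mem_top g)
            rw [h] at hm
            exact (commutatorElement_eq_one_iff_commute.mp (Subgroup.mem_bot.mp hm)).symm.eq
          have hsurj := QuotientGroup.mk'_surjective K
          haveI : Group.FG (G ⧸ K) := Group.fg_of_surjective hsurj
          have hker : (QuotientGroup.mk' K).ker = K := QuotientGroup.ker_mk' K
          have hq : Subgroup.lowerCentralSeries (⊤ : Subgroup (G ⧸ K)) (m + 1) = ⊥ := by
            rw [← lcs_map_surjective (QuotientGroup.mk' K) hsurj (m + 1),
              Subgroup.map_eq_bot_iff, hker]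
          have noethQ := ih hq
          -- K is f.g.
          have hKle : K ≤ Subgroup.lowerCentralSeries (⊤ : Subgroup G) m :=
            Subgroup.lowerCentralSeries_antitone (S := ⊤) (Nat.le_succ m)
          obtain ⟨A, hAH, hHcl⟩ :=
            exists_finset_closure_union_ker (QuotientGroup.mk' K) (Subgroup.lowerCentralSeries (⊤ : Subgroup G) m)
              (noethQ _)
          have hinf : Subgroup.lowerCentralSeries (⊤ : Subgroup G) m ⊓ (QuotientGroup.mk' K).ker = K := by
            rw [hker]
            exact inf_eq_right.mpr hKle
          rw [hinf] at hHcl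
          have hKfg : K.FG := by
            have := commutator_subgroup_fg (Subgroup.lowerCentralSeries (⊤ : Subgroup G) m)
              (hKcomm ▸ hKcent) (hKcomm ▸ hKle) A hAH (by rw [hKcomm]; exact hHcl)
            rwa [hKcomm] at this
          -- arbitrary subgroup
          have hinterfg : (H ⊓ (QuotientGroup.mk' K).ker).FG := by
            rw [hker]
            haveI : Group.FG ↥K := (Group.fg_iff_subgroup_fg K).mpr hKfg
            letI : CommGroup ↥K :=
              { (inferInstance : Group ↥K) with
                mul_comm := fun a b =>
                  Subtype.ext (Subgroup.mem_center_iff.mp (hKcent b.2) (a : G)) }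
            have h1 := fg_subgroup_of_comm ((H ⊓ K).subgroupOf K)
            have h2 := h1.map' K.subtype
            rwa [Subgroup.subgroupOf_map_subtype, inf_assoc, inf_idem] at h2
          exact fg_of_map_fg_of_ker_fg _ H (noethQ _) hinterfg

/-- Every subgroup of a f.g. nilpotent group is f.g. -/
theorem fg_subgroup_of_nilpotent {G : Type u} [Group G] [Group.FG G] [Group.IsNilpotent G]
    (H : Subgroup G) : H.FG := by
  obtain ⟨n, hn⟩ := Subgroup.nilpotent_iff_lowerCentralSeries.mp ‹_›
  exact fg_subgroup_of_nilpotent_aux n hn H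

end Noeth

section FiniteCenter

universe v

variable {G : Type*} [Group G]

/-- If the center of a f.g. group is finite, so is the center of the quotient by the center. -/
theorem finite_center_quotient_center [Group.FG G]
    (hZ : Finite (Subgroup.center G)) :
    Finite (Subgroup.center (G ⧸ Subgroup.center G)) := by
  classical
  set Z := Subgroup.center G with hZdef
  set mk := QuotientGroup.mk' Z with hmkdef
  set Z₂ := Subgroup.comap mk (Subgroup.center (G ⧸ Z)) with hZ₂
  obtain ⟨S, hS⟩ : (⊤ : Subgroup G).FG := Group.fg_def.mp ‹_›
  have hcent : ∀ x ∈ Z₂, ∀ g : G, ⁅x, g⁆ ∈ Z := by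
    intro x hx g
    have hxc : Commute (mk x) (mk g) :=
      (Subgroup.mem_center_iff.mp hx (mk g)).symm
    have h1 : ⁅x, g⁆ ∈ mk.ker := by
      rw [MonoidHom.mem_ker, map_commutatorElement]
      exact commutatorElement_eq_one_iff_commute.mpr hxc
    rwa [hmkdef, QuotientGroup.ker_mk'] at h1
  let φ : ↥Z₂ →* (↥S → ↥Z) :=
    MonoidHom.mk' (fun x s => ⟨⁅(x : G), (s : G)⁆, hcent x x.2 s⟩)
      (by
        intro x y
        funext s
        apply Subtype.ext
        show ⁅((x * y : ↥Z₂) : G), (s : G)⁆ = ⁅(x : G), (s : G)⁆ * ⁅(y : G), (s : G)⁆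
        push_cast
        rw [comm_mul_left, center_conj (hcent y y.2 s) (x : G)]
        exact (Subgroup.mem_center_iff.mp (hcent y y.2 s) _).symm)
  have hker : ∀ x : ↥Z₂, φ x = 1 → (x : G) ∈ Z := by
    intro x hx1
    have hcommS : ∀ s ∈ S, Commute (s : G) (x : G) := by
      intro s hs
      have := congrFun hx1 ⟨s, hs⟩
      have hv : ⁅(x : G), s⁆ = 1 := congrArg Subtype.val this
      exact (commutatorElement_eq_one_iff_commute.mp hv).symm
    rw [hZdef, Subgroup.mem_center_iff]
    intro g
    have hg : g ∈ Subgroup.closure (S : Set G) := by rw [hS]; trivial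
    induction hg using Subgroup.closure_induction with
    | mem s hs => exact hcommS s hs
    | one => group
    | mul a b ha hb iha ihb => exact (Commute.mul_left iha ihb : _)
    | inv a ha iha => exact (Commute.inv_left iha : _)
  haveI hkerfin : Finite φ.ker := by
    apply Finite.of_injective (fun k : φ.ker => (⟨((k : ↥Z₂) : G), hker k.1 k.2⟩ : ↥Z))
    intro a b hab
    simp only [Subtype.mk.injEq] at hab
    exact Subtype.ext (Subtype.ext hab)
  haveI hquotfin : Finite (↥Z₂ ⧸ φ.ker) :=
    Finite.of_injective (QuotientGroup.kerLift φ) (QuotientGroup.kerLift_injective φ)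
  haveI hZ₂fin : Finite ↥Z₂ :=
    Finite.of_equiv _ (Subgroup.groupEquivQuotientProdSubgroup (s := φ.ker)).symm
  have hmapeq : Subgroup.center (G ⧸ Z) = Z₂.map mk :=
    (Subgroup.map_comap_eq_self_of_surjective (QuotientGroup.mk'_surjective Z) _).symm
  rw [hmapeq]
  have hsetfin : ((Z₂.map mk : Subgroup (G ⧸ Z)) : Set (G ⧸ Z)).Finite := by
    rw [Subgroup.coe_map]
    exact Set.Finite.image _ (Set.toFinite _)
  exact hsetfin.to_subtype

universe u

/-- A f.g. nilpotent group with finite center is finite. -/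
theorem finite_of_finite_center_aux (c : ℕ) :
    ∀ {G : Type u} [Group G] [Group.FG G] [Group.IsNilpotent G],
      Group.nilpotencyClass G ≤ c → Finite (Subgroup.center G) → Finite G := by
  induction c with
  | zero =>
      intro G _ _ _ hc _
      have : Subsingleton G :=
        nilpotencyClass_zero_iff_subsingleton.mp (Nat.le_zero.mp hc)
      exact Finite.of_subsingleton
  | succ c ih =>
      intro G _ _ _ hc hZ
      haveI : Group.FG (G ⧸ Subgroup.center G) :=
        Group.fg_of_surjective (QuotientGroup.mk'_surjective (Subgroup.center G))
      have hc' : Group.nilpotencyClass (G ⧸ Subgroup.center G) ≤ c := by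
        rw [nilpotencyClass_quotient_center]
        omega
      have hfinQ : Finite (G ⧸ Subgroup.center G) := ih hc' (finite_center_quotient_center hZ)
      exact Finite.of_equiv _
        (Subgroup.groupEquivQuotientProdSubgroup (s := Subgroup.center G)).symm

/-- A f.g. nilpotent group with finite center is finite. -/
theorem finite_of_finite_center {G : Type u} [Group G] [Group.FG G] [Group.IsNilpotent G]
    (hZ : Finite (Subgroup.center G)) : Finite G :=
  finite_of_finite_center_aux (Group.nilpotencyClass G) le_rfl hZ

end FiniteCenter

section Monolithic

variable {Q : Type*} [Group Q]

theorem inf_center_ne_bot_aux (N : Subgroup Q) (hN : N.Normal) :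
    ∀ n : ℕ, N ⊓ Subgroup.upperCentralSeries Q n ≠ ⊥ → N ⊓ Subgroup.center Q ≠ ⊥ := by
  intro n
  induction n with
  | zero =>
      intro h
      exact absurd (by rw [Subgroup.upperCentralSeries_zero, inf_bot_eq]) h
  | succ n ih =>
      intro h
      by_cases hc : N ⊓ Subgroup.upperCentralSeries Q n = ⊥
      · have hne : ∃ x ∈ N ⊓ Subgroup.upperCentralSeries Q (n + 1), x ≠ 1 := by
          by_contra hcon
          push_neg at hcon
          exact h (Subgroup.eq_bot_iff_forall _ |>.mpr hcon)
        obtain ⟨x, hx, hx1⟩ := hne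
        have hxc : x ∈ Subgroup.center Q := by
          rw [Subgroup.mem_center_iff]
          intro q
          have h1 : x * q * x⁻¹ * q⁻¹ ∈ N := by
            have h2 : q * x⁻¹ * q⁻¹ ∈ N := hN.conj_mem x⁻¹ (N.inv_mem hx.1) q
            have h3 := N.mul_mem hx.1 h2
            have : x * (q * x⁻¹ * q⁻¹) = x * q * x⁻¹ * q⁻¹ := by group
            rwa [this] at h3
          have h2 : x * q * x⁻¹ * q⁻¹ ∈ Subgroup.upperCentralSeries Q n :=
            Subgroup.mem_upperCentralSeries_succ_iff.mp hx.2 q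
          have h3 : x * q * x⁻¹ * q⁻¹ ∈ N ⊓ Subgroup.upperCentralSeries Q n := ⟨h1, h2⟩
          rw [hc, Subgroup.mem_bot] at h3
          have : q * x = x * q := by
            have := congrArg (fun y => y * q * x) h3
            simpa [mul_assoc] using this.symm
          exact this
        intro hbot
        have : x ∈ (⊥ : Subgroup Q) := hbot ▸ (⟨hx.1, hxc⟩ : x ∈ N ⊓ Subgroup.center Q)
        exact hx1 (Subgroup.mem_bot.mp this)
      · exact ih hc

theorem normal_inf_center_ne_bot [Group.IsNilpotent Q] (N : Subgroup Q) (hN : N.Normal)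
    (h : N ≠ ⊥) : N ⊓ Subgroup.center Q ≠ ⊥ := by
  obtain ⟨n, hn⟩ := (‹Group.IsNilpotent Q›).nilpotent'
  apply inf_center_ne_bot_aux N hN n
  rw [hn, inf_top_eq]
  exact h

theorem exists_maximal_normal_avoiding (g : Q) (hg : g ≠ 1) :
    ∃ M : Subgroup Q, M.Normal ∧ g ∉ M ∧
      ∀ N : Subgroup Q, N.Normal → g ∉ N → M ≤ N → N = M := by
  set s : Set (Subgroup Q) := {M | M.Normal ∧ g ∉ M} with hs
  have hbot : (⊥ : Subgroup Q) ∈ s := by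
    refine ⟨inferInstance, ?_⟩
    simpa using hg
  have hub : ∀ c ⊆ s, IsChain (· ≤ ·) c → ∀ y ∈ c, ∃ ub ∈ s, ∀ z ∈ c, z ≤ ub := by
    intro c hcs hchain y hy
    haveI : Nonempty c := ⟨⟨y, hy⟩⟩
    have hdir : Directed (· ≤ ·) (fun N : c => (N : Subgroup Q)) :=
      directedOn_iff_directed.mp hchain.directedOn
    refine ⟨⨆ N : c, (N : Subgroup Q), ⟨?_, ?_⟩, ?_⟩
    · constructor
      intro x hx q
      rw [Subgroup.mem_iSup_of_directed hdir] at hx ⊢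
      obtain ⟨N, hN⟩ := hx
      exact ⟨N, ((hcs N.2).1).conj_mem x hN q⟩
    · rw [Subgroup.mem_iSup_of_directed hdir]
      rintro ⟨N, hN⟩
      exact (hcs N.2).2 hN
    · intro z hz
      exact le_iSup (fun N : c => (N : Subgroup Q)) ⟨z, hz⟩
  obtain ⟨M, -, hMmax⟩ := zorn_le_nonempty₀ s hub ⊥ hbot
  exact ⟨M, hMmax.1.1, hMmax.1.2, fun N hN1 hN2 hle =>
    le_antisymm (hMmax.2 ⟨hN1, hN2⟩ hle) hle⟩

/-- A f.g. nilpotent group with an element contained in every nontrivial normal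
subgroup is finite. -/
theorem finite_of_monolithic [Group.FG Q] [Group.IsNilpotent Q] (g : Q) (hg : g ≠ 1)
    (hmono : ∀ N : Subgroup Q, N.Normal → N ≠ ⊥ → g ∈ N) : Finite Q := by
  -- `g` is central
  have hgc : g ∈ Subgroup.center Q := by
    have h1 : Subgroup.normalClosure {g} ≠ ⊥ := by
      intro hb
      have := Subgroup.subset_normalClosure (s := {g}) rfl
      rw [hb, SetLike.mem_coe, Subgroup.mem_bot] at this
      exact hg this
    have h2 := normal_inf_center_ne_bot _ Subgroup.normalClosure_normal h1
    have h3 : (Subgroup.normalClosure {g} ⊓ Subgroup.center Q).Normal := by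
      haveI := Subgroup.normalClosure_normal (s := ({g} : Set Q))
      exact Subgroup.normal_inf_normal _ _
    exact (hmono _ h3 h2).2
  -- every nontrivial element of the center has `g` as a power
  have hsub : ∀ x : Q, x ∈ Subgroup.center Q → x ≠ 1 → g ∈ Subgroup.zpowers x := by
    intro x hx hx1
    apply hmono
    · exact normal_of_le_center' _ (by
        rw [Subgroup.zpowers_le]
        exact hx)
    · intro hb
      have : x ∈ (⊥ : Subgroup Q) := hb ▸ Subgroup.mem_zpowers x
      exact hx1 (Subgroup.mem_bot.mp this)
  -- the center is torsion
  have htor : Monoid.IsTorsion ↥(Subgroup.center Q) := by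
    intro x
    by_contra hfin
    have hxne : (x : Q) ≠ 1 := by
      intro hx1
      apply hfin
      have : x = 1 := Subtype.ext hx1
      rw [this]
      exact IsOfFinOrder.one
    have hinfQ : ¬IsOfFinOrder (x : Q) := by
      intro hQ
      apply hfin
      rw [← orderOf_pos_iff] at hQ ⊢
      rwa [Subgroup.orderOf_coe] at hQ
    have hinj : Function.Injective (fun n : ℤ => (x : Q) ^ n) :=
      injective_zpow_iff_not_isOfFinOrder.mpr hinfQ
    obtain ⟨m, hm⟩ := Subgroup.mem_zpowers_iff.mp (hsub (x : Q) x.2 hxne)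
    have hm0 : m ≠ 0 := by
      intro h0
      rw [h0, zpow_zero] at hm
      exact hg hm.symm
    set y : Q := (x : Q) ^ (2 * m) with hy
    have hyc : y ∈ Subgroup.center Q := Subgroup.zpow_mem _ x.2 (2 * m)
    have hyne : y ≠ 1 := by
      intro h1
      have : (x : Q) ^ (2 * m) = (x : Q) ^ (0 : ℤ) := by rw [zpow_zero]; exact h1
      have := hinj this
      omega
    obtain ⟨k, hk⟩ := Subgroup.mem_zpowers_iff.mp (hsub y hyc hyne)
    have heq : (x : Q) ^ (2 * m * k) = (x : Q) ^ m :=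
      calc (x : Q) ^ (2 * m * k) = ((x : Q) ^ (2 * m)) ^ k := by rw [← zpow_mul]
        _ = g := hk
        _ = (x : Q) ^ m := hm.symm
    have h4 := hinj heq
    have h5 : m * (2 * k - 1) = 0 := by linear_combination h4
    rcases mul_eq_zero.mp h5 with h6 | h6
    · exact hm0 h6
    · omega
  -- the center is finite
  haveI : Group.FG ↥(Subgroup.center Q) :=
    (Group.fg_iff_subgroup_fg _).mpr (fg_subgroup_of_nilpotent _)
  letI : CommGroup ↥(Subgroup.center Q) :=
    { (inferInstance : Group ↥(Subgroup.center Q)) with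
      mul_comm := fun a b =>
        Subtype.ext (Subgroup.mem_center_iff.mp b.2 (a : Q)) }
  have hZfin : Finite ↥(Subgroup.center Q) :=
    CommGroup.finite_of_fg_torsion ↥(Subgroup.center Q) htor
  exact finite_of_finite_center hZfin

end Monolithic

section Main

/-- Any nontrivial element of a f.g. nilpotent group survives in a finite quotient. -/
theorem exists_finite_quotient_of_fg_nilpotent {Q : Type*} [Group Q] [Group.FG Q]
    [Group.IsNilpotent Q] (g : Q) (hg : g ≠ 1) :
    ∃ (F : Type) (_ : Group F) (_ : Finite F) (ρ : Q →* F), ρ g ≠ 1 := by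
  obtain ⟨M, hMnorm, hMg, hMmax⟩ := exists_maximal_normal_avoiding g hg
  haveI := hMnorm
  haveI : Group.FG (Q ⧸ M) := Group.fg_of_surjective (QuotientGroup.mk'_surjective M)
  have hmono : ∀ N : Subgroup (Q ⧸ M), N.Normal → N ≠ ⊥ → QuotientGroup.mk' M g ∈ N := by
    intro N hNn hNbot
    set N' := Subgroup.comap (QuotientGroup.mk' M) N with hN'def
    haveI hN'n : N'.Normal := hNn.comap _
    have hMN' : M ≤ N' := by
      intro m hm
      show QuotientGroup.mk' M m ∈ N
      have h1 : QuotientGroup.mk' M m = 1 := by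
        rw [← MonoidHom.mem_ker, QuotientGroup.ker_mk']
        exact hm
      rw [h1]
      exact N.one_mem
    by_cases hgN' : g ∈ N'
    · exact hgN'
    · exfalso
      apply hNbot
      have hN'M : N' = M := hMmax N' hN'n hgN' hMN'
      have hmap := Subgroup.map_comap_eq_self_of_surjective
        (QuotientGroup.mk'_surjective M) N
      rw [← hmap]
      show Subgroup.map (QuotientGroup.mk' M) N' = ⊥
      rw [hN'M, Subgroup.map_eq_bot_iff, QuotientGroup.ker_mk']
  have hq1 : QuotientGroup.mk' M g ≠ 1 := by
    rw [Ne, ← MonoidHom.mem_ker, QuotientGroup.ker_mk']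
    exact hMg
  haveI hfin : Finite (Q ⧸ M) := finite_of_monolithic _ hq1 hmono
  obtain ⟨F, hFgroup, hFtype, ⟨e⟩⟩ :
      ∃ (F : Type) (_ : Group F) (_ : Fintype F), Nonempty ((Q ⧸ M) ≃* F) :=
    Finite.exists_type_univ_nonempty_mulEquiv (Q ⧸ M)
  refine ⟨F, hFgroup, Finite.of_fintype F, e.toMonoidHom.comp (QuotientGroup.mk' M), ?_⟩
  intro h1
  apply hq1
  have := e.injective (by simpa using h1 : e (QuotientGroup.mk' M g) = e 1)
  exact this

end Main


/-- A group is residually finite if every nontrivial element survives in some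
finite quotient. -/
def ResiduallyFinite (G : Type*) [Group G] : Prop :=
  ∀ g : G, g ≠ 1 → ∃ (F : Type) (_ : Group F) (_ : Finite F) (ρ : G →* F), ρ g ≠ 1

/-- If `Γ` is residually finite, `1 → Z → Γ̃ → Γ → 1` is an extension with `Γ̃`
finitely generated, and there is a nilpotent quotient `ρ : Γ̃ ↠ N` such that
`Z = ker π` injects into `N`, then `Γ̃` is residually finite. -/
theorem residuallyFinite_of_nilpotent_quotient (Γt Γ N : Type*) [Group Γt] [Group Γ]
    [Group N] [Group.FG Γt] [Group.IsNilpotent N]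
    (π : Γt →* Γ) (hπ : Function.Surjective π) (hΓ : ResiduallyFinite Γ)
    (ρ : Γt →* N) (hρ : Function.Surjective ρ)
    (hinj : ∀ z ∈ π.ker, ρ z = 1 → z = 1) :
    ResiduallyFinite Γt := by
  intro g hg
  by_cases hπ1 : π g = 1
  · have hρg : ρ g ≠ 1 := fun h => hg (hinj g (by rwa [MonoidHom.mem_ker]) h)
    haveI : Group.FG N := Group.fg_of_surjective hρ
    obtain ⟨F, hF, hFfin, σ, hσ⟩ := exists_finite_quotient_of_fg_nilpotent (ρ g) hρg
    exact ⟨F, hF, hFfin, σ.comp ρ, hσ⟩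
  · obtain ⟨F, hF, hFfin, σ, hσ⟩ := hΓ (π g) hπ1
    exact ⟨F, hF, hFfin, σ.comp π, hσ⟩
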